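/- The set {D_π : π a set partition of [l+k] having at most n blocks} is a basis of the vector space Hom_{S_n}((ℝⁿ)^{⊗k}, (ℝⁿ)^{⊗l}) of S_n-equivariant linear maps; in particular these maps are linearly independent over ℝ. -/

import Mathlib

open Classical
noncomputable section

/-- The `k`-th tensor (Kronecker) power of an `n × n` real matrix. -/
def tensorPow (n k : ℕ) (g : Matrix (Fin n) (Fin n) ℝ) :
    Matrix (Fin k → Fin n) (Fin k → Fin n) ℝ :=
  Matrix.of fun I J => ∏ i, g (I i) (J i)

/-- The permutation matrix of `σ ∈ S_n`, sending `e_j` to `e_{σ j}`. -/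
def permMat (n : ℕ) (σ : Equiv.Perm (Fin n)) : Matrix (Fin n) (Fin n) ℝ :=
  Matrix.of fun i j => if i = σ j then (1 : ℝ) else 0

/-- The matrix `D_π : (ℝⁿ)^{⊗k} → (ℝⁿ)^{⊗l}` associated to a set partition `π` of
`[l+k]` (encoded as a setoid on `Fin (l+k)`, top row first). -/
def Dmat (n l k : ℕ) (π : Setoid (Fin (l + k))) :
    Matrix (Fin l → Fin n) (Fin k → Fin n) ℝ :=
  Matrix.of fun I J =>
    if ∀ x y, π.r x y → Fin.append I J x = Fin.append I J y then (1 : ℝ) else 0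

/-- The space `Hom_{S_n}((ℝⁿ)^{⊗k}, (ℝⁿ)^{⊗l})` of `S_n`-equivariant linear maps,
as a submodule of the space of matrices. -/
def equivSubmodule (n k l : ℕ) :
    Submodule ℝ (Matrix (Fin l → Fin n) (Fin k → Fin n) ℝ) where
  carrier := {φ | ∀ σ : Equiv.Perm (Fin n),
    tensorPow n l (permMat n σ) * φ = φ * tensorPow n k (permMat n σ)}
  add_mem' := by
    intro a b ha hb σ
    rw [Matrix.mul_add, Matrix.add_mul, ha σ, hb σ]
  zero_mem' := by
    intro σ
    rw [Matrix.mul_zero, Matrix.zero_mul]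
  smul_mem' := by
    intro c a ha σ
    rw [Matrix.mul_smul, Matrix.smul_mul, ha σ]

namespace DmatAux

instance setoidFinite {α : Type*} [Finite α] : Finite (Setoid α) :=
  Finite.of_injective (fun s => s.r) fun s t h =>
    Setoid.ext fun x y => iff_of_eq (congrFun (congrFun h x) y)

/-- Two injections of a fintype into a fintype differ by a permutation. -/
lemma perm_extend {α β : Type*} [Fintype α] [Fintype β] [DecidableEq β]
    (F G : α → β) (hF : Function.Injective F) (hG : Function.Injective G) :
    ∃ σ : Equiv.Perm β, ∀ a, σ (F a) = G a := by
  classical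
  let e1 := Equiv.ofInjective F hF
  let e2 := Equiv.ofInjective G hG
  have hcard : Fintype.card ((Set.range F)ᶜ : Set β) =
      Fintype.card ((Set.range G)ᶜ : Set β) := by
    rw [Fintype.card_compl_set, Fintype.card_compl_set,
      Fintype.card_congr e1.symm, Fintype.card_congr e2.symm]
  obtain ⟨ce⟩ := Fintype.card_eq.mp hcard
  refine ⟨(Equiv.Set.sumCompl (Set.range F)).symm.trans
    (((e1.symm.trans e2).sumCongr ce).trans (Equiv.Set.sumCompl (Set.range G))), fun a => ?_⟩
  have h1 : (Equiv.Set.sumCompl (Set.range F)).symm (F a) =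
      Sum.inl ⟨F a, Set.mem_range_self a⟩ :=
    Equiv.Set.sumCompl_symm_apply_of_mem (Set.mem_range_self a)
  simp [h1, e1, e2]

lemma ker_card_le {m n : ℕ} (f : Fin m → Fin n) :
    Nat.card (Quotient (Setoid.ker f)) ≤ n := by
  have hinj : Function.Injective (Quotient.lift f (fun a b hab => hab) :
      Quotient (Setoid.ker f) → Fin n) := by
    rintro ⟨x⟩ ⟨y⟩ h
    exact Quotient.sound h
  calc Nat.card (Quotient (Setoid.ker f)) ≤ Nat.card (Fin n) :=
        Nat.card_le_card_of_injective _ hinj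
    _ = n := Nat.card_eq_fintype_card.trans (Fintype.card_fin n)

lemma exists_ker_eq {m n : ℕ} (π : Setoid (Fin m)) (h : Nat.card (Quotient π) ≤ n) :
    ∃ f : Fin m → Fin n, Setoid.ker f = π := by
  classical
  haveI : Fintype (Quotient π) := Fintype.ofFinite _
  have hcard : Fintype.card (Quotient π) ≤ Fintype.card (Fin n) := by
    rw [Fintype.card_fin]
    simpa [Nat.card_eq_fintype_card] using h
  obtain ⟨e⟩ := Function.Embedding.nonempty_of_card_le hcard
  refine ⟨fun x => e (Quotient.mk π x), ?_⟩
  ext x y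
  rw [Setoid.ker_def]
  constructor
  · intro hxy
    exact Quotient.eq.mp (e.injective hxy)
  · intro hxy
    exact congrArg e (Quotient.sound hxy)

lemma exists_perm_comp {m n : ℕ} (f g : Fin m → Fin n)
    (h : Setoid.ker f = Setoid.ker g) :
    ∃ σ : Equiv.Perm (Fin n), σ ∘ f = g := by
  classical
  haveI : Fintype (Quotient (Setoid.ker f)) := Fintype.ofFinite _
  have hg : ∀ a b : Fin m, (Setoid.ker f).r a b → g a = g b := by
    intro a b hab
    have : (Setoid.ker g).r a b := h ▸ hab
    exact this
  let F : Quotient (Setoid.ker f) → Fin n := Quotient.lift f (fun a b hab => hab)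
  let G : Quotient (Setoid.ker f) → Fin n := Quotient.lift g hg
  have hF : Function.Injective F := by rintro ⟨x⟩ ⟨y⟩ hxy; exact Quotient.sound hxy
  have hG : Function.Injective G := by
    rintro ⟨x⟩ ⟨y⟩ hxy
    refine Quotient.sound ?_
    have : (Setoid.ker g).r x y := hxy
    exact h ▸ this
  obtain ⟨σ, hσ⟩ := perm_extend F G hF hG
  exact ⟨σ, funext fun x => hσ (Quotient.mk _ x)⟩


lemma tensorPow_permMat_apply (n k : ℕ) (σ : Equiv.Perm (Fin n)) (I J : Fin k → Fin n) :
    tensorPow n k (permMat n σ) I J = if I = ⇑σ ∘ J then (1:ℝ) else 0 := by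
  simp only [tensorPow, permMat, Matrix.of_apply]
  by_cases h : I = ⇑σ ∘ J
  · subst h; simp
  · rw [if_neg h]
    obtain ⟨i, hi⟩ : ∃ i, I i ≠ σ (J i) := by
      by_contra hh
      push_neg at hh
      exact h (funext hh)
    exact Finset.prod_eq_zero (Finset.mem_univ i) (by simp [hi])

lemma mul_tensorPow_left (n k l : ℕ) (σ : Equiv.Perm (Fin n))
    (φ : Matrix (Fin l → Fin n) (Fin k → Fin n) ℝ) (I J) :
    (tensorPow n l (permMat n σ) * φ) I J = φ (⇑σ⁻¹ ∘ I) J := by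
  rw [Matrix.mul_apply]
  have hiff : ∀ M : Fin l → Fin n, (I = ⇑σ ∘ M) ↔ M = ⇑σ⁻¹ ∘ I := by
    intro M
    constructor
    · intro h; subst h; funext i; simp
    · intro h; subst h; funext i; simp
  simp_rw [tensorPow_permMat_apply, hiff, ite_mul, one_mul, zero_mul]
  simp

lemma mul_tensorPow_right (n k l : ℕ) (σ : Equiv.Perm (Fin n))
    (φ : Matrix (Fin l → Fin n) (Fin k → Fin n) ℝ) (I J) :
    (φ * tensorPow n k (permMat n σ)) I J = φ I (⇑σ ∘ J) := by
  rw [Matrix.mul_apply]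
  simp_rw [tensorPow_permMat_apply, mul_ite, mul_one, mul_zero]
  simp

lemma mem_equiv_iff (n k l : ℕ) (φ : Matrix (Fin l → Fin n) (Fin k → Fin n) ℝ) :
    φ ∈ equivSubmodule n k l ↔
      ∀ (σ : Equiv.Perm (Fin n)) I J, φ (⇑σ ∘ I) (⇑σ ∘ J) = φ I J := by
  constructor
  · intro h σ I J
    have h2 := congrFun (congrFun (h σ) (⇑σ ∘ I)) J
    rw [mul_tensorPow_left n k l σ φ (⇑σ ∘ I) J,
      mul_tensorPow_right n k l σ φ (⇑σ ∘ I) J] at h2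
    have hI : ⇑σ⁻¹ ∘ ⇑σ ∘ I = I := by funext i; simp
    rw [hI] at h2
    exact h2.symm
  · intro h σ
    ext I J
    rw [mul_tensorPow_left n k l σ φ I J, mul_tensorPow_right n k l σ φ I J]
    have h2 := h σ (⇑σ⁻¹ ∘ I) J
    have hI : ⇑σ ∘ ⇑σ⁻¹ ∘ I = I := by funext i; simp
    rw [hI] at h2
    exact h2.symm

lemma comp_append {n l k : ℕ} (σ : Fin n → Fin n) (I : Fin l → Fin n) (J : Fin k → Fin n) :
    σ ∘ Fin.append I J = Fin.append (σ ∘ I) (σ ∘ J) := by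
  funext x
  induction x using Fin.addCases with
  | left i => simp [Fin.append_left]
  | right j => simp [Fin.append_right]

def kerIJ (n l k : ℕ) (I : Fin l → Fin n) (J : Fin k → Fin n) : Setoid (Fin (l + k)) :=
  Setoid.ker (Fin.append I J)

lemma Dmat_apply (n l k : ℕ) (π : Setoid (Fin (l + k))) (I J) :
    Dmat n l k π I J = if π ≤ kerIJ n l k I J then (1:ℝ) else 0 := by
  simp only [Dmat, Matrix.of_apply]
  refine if_congr ?_ rfl rfl
  constructor
  · intro h x y hxy
    exact h x y hxy
  · intro h x y hxy
    exact h hxy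

def Emat (n l k : ℕ) (π : Setoid (Fin (l + k))) :
    Matrix (Fin l → Fin n) (Fin k → Fin n) ℝ :=
  Matrix.of fun I J => if kerIJ n l k I J = π then (1:ℝ) else 0

lemma Dmat_mem (n l k : ℕ) (π : Setoid (Fin (l + k))) :
    Dmat n l k π ∈ equivSubmodule n k l := by
  rw [mem_equiv_iff]
  intro σ I J
  simp only [Dmat, Matrix.of_apply]
  refine if_congr ?_ rfl rfl
  rw [← comp_append]
  constructor
  · intro h x y hxy
    exact σ.injective (h x y hxy)
  · intro h x y hxy
    exact congrArg σ (h x y hxy)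

lemma kerIJ_card (n l k : ℕ) (I : Fin l → Fin n) (J : Fin k → Fin n) :
    Nat.card (Quotient (kerIJ n l k I J)) ≤ n := ker_card_le _

lemma exists_IJ (n l k : ℕ) (π : Setoid (Fin (l + k))) (h : Nat.card (Quotient π) ≤ n) :
    ∃ (I : Fin l → Fin n) (J : Fin k → Fin n), kerIJ n l k I J = π := by
  obtain ⟨f, hf⟩ : ∃ f : Fin (l+k) → Fin n, Setoid.ker f = π := exists_ker_eq π h
  refine ⟨f ∘ Fin.castAdd k, f ∘ Fin.natAdd l, ?_⟩
  have : Fin.append (f ∘ Fin.castAdd k) (f ∘ Fin.natAdd l) = f := by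
    funext x
    induction x using Fin.addCases with
    | left i => simp [Fin.append_left]
    | right j => simp [Fin.append_right]
  rw [kerIJ, this, hf]

lemma equiv_entry_eq (n k l : ℕ) (φ : Matrix (Fin l → Fin n) (Fin k → Fin n) ℝ)
    (hφ : φ ∈ equivSubmodule n k l) (I I' J J')
    (h : kerIJ n l k I J = kerIJ n l k I' J') : φ I J = φ I' J' := by
  obtain ⟨σ, hσ⟩ : ∃ σ : Equiv.Perm (Fin n), ⇑σ ∘ Fin.append I J = Fin.append I' J' :=
    exists_perm_comp _ _ h
  rw [comp_append] at hσ
  have hI : σ ∘ I = I' := by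
    funext i
    have := congrFun hσ (Fin.castAdd k i)
    simpa [Fin.append_left] using this
  have hJ : σ ∘ J = J' := by
    funext j
    have := congrFun hσ (Fin.natAdd l j)
    simpa [Fin.append_right] using this
  rw [← hI, ← hJ, (mem_equiv_iff n k l φ).mp hφ σ I J]


end DmatAux

open DmatAux

/-- the maps `D_π`, for `π` a set partition of `[l+k]` with at most `n`
blocks, form a basis of `Hom_{S_n}((ℝⁿ)^{⊗k}, (ℝⁿ)^{⊗l})` (in particular they are
linearly independent over `ℝ`). -/
theorem Dmat_basis (n k l : ℕ) (hn : 0 < n) :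
    ∃ b : Module.Basis {π : Setoid (Fin (l + k)) // Nat.card (Quotient π) ≤ n} ℝ
      (equivSubmodule n k l),
      ∀ p, (b p : Matrix (Fin l → Fin n) (Fin k → Fin n) ℝ) = Dmat n l k p.val := by
  classical
  set PT := {π : Setoid (Fin (l + k)) // Nat.card (Quotient π) ≤ n} with hPT
  haveI : Fintype PT := Fintype.ofFinite _
  choose RI RJ hR using fun p : PT => exists_IJ n l k p.1 p.2
  -- linear independence of the Dmat family in the matrix space
  have li0 : LinearIndependent ℝ (fun p : PT => Dmat n l k p.1) := by
    rw [Fintype.linearIndependent_iff]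
    intro c hc p
    refine Finite.to_wellFoundedLT.wf.induction (C := fun p => c p = 0) p ?_
    intro q IH
    have he := Matrix.ext_iff.mpr hc (RI q) (RJ q)
    rw [Matrix.zero_apply, Matrix.sum_apply] at he
    simp_rw [Matrix.smul_apply, Dmat_apply, hR q, smul_eq_mul, mul_ite, mul_one,
      mul_zero] at he
    rw [← Finset.sum_filter] at he
    have hfil : Finset.univ.filter (fun p : PT => p.1 ≤ q.1)
        = insert q (Finset.univ.filter fun p : PT => p.1 < q.1) := by
      ext r
      simp only [Finset.mem_filter, Finset.mem_univ, true_and, Finset.mem_insert]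
      constructor
      · intro hle
        rcases lt_or_eq_of_le hle with h | h
        · exact Or.inr h
        · exact Or.inl (Subtype.ext h)
      · rintro (rfl | hlt)
        · exact le_refl _
        · exact le_of_lt hlt
    rw [hfil, Finset.sum_insert (by simp)] at he
    have hz : ∑ r ∈ Finset.univ.filter (fun p : PT => p.1 < q.1), c r = 0 :=
      Finset.sum_eq_zero fun r hr =>
        IH r (Subtype.coe_lt_coe.mp (Finset.mem_filter.mp hr).2)
    rw [hz, add_zero] at he
    exact he
  -- the span of the Dmat family
  set S := Submodule.span ℝ (Set.range fun p : PT => Dmat n l k p.1) with hS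
  have ematS : ∀ p : PT, Emat n l k p.1 ∈ S := by
    intro p
    refine Finite.to_wellFoundedGT.wf.induction (C := fun p => Emat n l k p.1 ∈ S) p ?_
    intro q IH
    have hdec : Emat n l k q.1 = Dmat n l k q.1
        - ∑ r ∈ Finset.univ.filter (fun r : PT => q.1 < r.1), Emat n l k r.1 := by
      ext I J
      simp only [Matrix.sub_apply, Matrix.sum_apply, Emat, Matrix.of_apply, Dmat_apply]
      have hτP : Nat.card (Quotient (kerIJ n l k I J)) ≤ n := kerIJ_card n l k I J
      by_cases hlt : q.1 < kerIJ n l k I J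
      · have hsum : ∑ r ∈ Finset.univ.filter (fun r : PT => q.1 < r.1),
            (if kerIJ n l k I J = r.1 then (1:ℝ) else 0) = 1 := by
          rw [Finset.sum_eq_single_of_mem (⟨kerIJ n l k I J, hτP⟩ : PT)]
          · simp
          · simp only [Finset.mem_filter, Finset.mem_univ, true_and]
            exact hlt
          · intro r hr hne
            exact if_neg fun hh => hne (Subtype.ext hh.symm)
        rw [hsum, if_neg (fun hh : kerIJ n l k I J = q.1 => absurd hh.symm (ne_of_lt hlt)),
          if_pos (le_of_lt hlt)]
        norm_num
      · have hsum0 : ∑ r ∈ Finset.univ.filter (fun r : PT => q.1 < r.1),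
            (if kerIJ n l k I J = r.1 then (1:ℝ) else 0) = 0 := by
          refine Finset.sum_eq_zero fun r hr => ?_
          rcases Finset.mem_filter.mp hr with ⟨-, hq⟩
          refine if_neg fun hh => hlt ?_
          rw [hh]
          exact hq
        rw [hsum0, sub_zero]
        refine if_congr ?_ rfl rfl
        constructor
        · intro h
          exact h ▸ le_refl _
        · intro h
          exact ((lt_or_eq_of_le h).resolve_left hlt).symm
    rw [hdec]
    refine Submodule.sub_mem _ (Submodule.subset_span ⟨q, rfl⟩) (Submodule.sum_mem _ ?_)
    intro r hr
    exact IH r (Subtype.coe_lt_coe.mp (Finset.mem_filter.mp hr).2)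
  have spanS : ∀ φ ∈ equivSubmodule n k l, φ ∈ S := by
    intro φ hφ
    have hrep : φ = ∑ p : PT, (φ (RI p) (RJ p)) • Emat n l k p.1 := by
      ext I J
      rw [Matrix.sum_apply]
      simp_rw [Matrix.smul_apply, Emat, Matrix.of_apply, smul_eq_mul, mul_ite, mul_one,
        mul_zero]
      have hτP : Nat.card (Quotient (kerIJ n l k I J)) ≤ n := kerIJ_card n l k I J
      rw [Finset.sum_eq_single_of_mem (⟨kerIJ n l k I J, hτP⟩ : PT) (Finset.mem_univ _)]
      · rw [if_pos rfl]
        exact (equiv_entry_eq n k l φ hφ (RI _) I (RJ _) J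
          (hR (⟨kerIJ n l k I J, hτP⟩ : PT))).symm
      · intro r hr hne
        exact if_neg fun hh => hne (Subtype.ext hh.symm)
    rw [hrep]
    exact Submodule.sum_mem _ fun p _ => Submodule.smul_mem _ _ (ematS p)
  -- assemble the basis
  let DD : PT → equivSubmodule n k l := fun p => ⟨Dmat n l k p.1, Dmat_mem n l k p.1⟩
  have li : LinearIndependent ℝ DD :=
    LinearIndependent.of_comp ((equivSubmodule n k l).subtype) li0
  have hspan : ⊤ ≤ Submodule.span ℝ (Set.range DD) := by
    intro x _
    have hx : (x : Matrix (Fin l → Fin n) (Fin k → Fin n) ℝ) ∈ S := spanS x.1 x.2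
    have himg : Submodule.map (equivSubmodule n k l).subtype
        (Submodule.span ℝ (Set.range DD)) = S := by
      rw [Submodule.map_span, ← Set.range_comp]
      rfl
    rw [← himg] at hx
    obtain ⟨y, hy, hyx⟩ := hx
    have hxy : y = x := Subtype.ext hyx
    exact hxy ▸ hy
  refine ⟨Module.Basis.mk li hspan, fun p => ?_⟩
  rw [Module.Basis.mk_apply]
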